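/- Suppose nonnegative sequences (y_r) and (z_r) satisfy the recurrences y_{r+1} ≤ (4/p_r)·(z_r + λ^r k^{c+r/2}) and z_{r+1} ≤ 2p_r·(y_r + 2λ^r n k^{c-r/2}) + z_r + λ^r k^{c+r/2}, where p_r = λ k^{r+1} (log n)/n, with initial values y_0 ≤ n and z_0 ≤ 1. If λ ≥ 4, k ≥ 2, and z_r ≤ 15 λ^r k^{c + (r+1)/2} log n, then y_{r+1} ≤ 4 λ^{r+1} n k^{c - (r+1)/2} and z_{r+1} ≤ 15 λ^{r+1} k^{c + 1 + r/2} log n. -/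

import Mathlib

set_option maxHeartbeats 1000000 in
open Real in
/-- Inductive step for the recurrences bounding the expected number of path-related
vertices `y r` and path-relevant subproblems `z r` at level `r`, where
`p r = λ k^(r+1) log n / n`. If `λ ≥ 4`, `k ≥ 2`, `n ≥ 2`, `log n ≥ 1`, `c ≥ 0`,
the sequences are nonnegative with `y 0 ≤ n`, `z 0 ≤ 1`, and the level-`r` bounds
`y r ≤ 4 λ^r n k^(c - r/2)` and `z r ≤ 15 λ^r k^(c+(r+1)/2) log n` hold, then
`y (r+1) ≤ 4 λ^(r+1) n k^(c-(r+1)/2)` and `z (r+1) ≤ 15 λ^(r+1) k^(c+1+r/2) log n`. -/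
theorem recurrence_inductive_step (n k lam c : ℝ) (y z p : ℕ → ℝ) (r : ℕ)
    (hn : 2 ≤ n) (hlog : 1 ≤ Real.log n) (hc : 0 ≤ c) (hlam : 4 ≤ lam) (hk : 2 ≤ k)
    (hy0 : y 0 ≤ n) (hz0 : z 0 ≤ 1)
    (hynn : ∀ s, 0 ≤ y s) (hznn : ∀ s, 0 ≤ z s)
    (hp : ∀ s, p s = lam * k ^ ((s : ℝ) + 1) * Real.log n / n)
    (hyrec : y (r + 1) ≤ (4 / p r) * (z r + lam ^ r * k ^ (c + (r : ℝ) / 2)))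
    (hzrec : z (r + 1) ≤
      2 * p r * (y r + 2 * lam ^ r * n * k ^ (c - (r : ℝ) / 2)) + z r +
        lam ^ r * k ^ (c + (r : ℝ) / 2))
    (hyr : y r ≤ 4 * lam ^ r * n * k ^ (c - (r : ℝ) / 2))
    (hzr : z r ≤ 15 * lam ^ r * k ^ (c + ((r : ℝ) + 1) / 2) * Real.log n) :
    y (r + 1) ≤ 4 * lam ^ (r + 1) * n * k ^ (c - ((r : ℝ) + 1) / 2) ∧
      z (r + 1) ≤ 15 * lam ^ (r + 1) * k ^ (c + 1 + (r : ℝ) / 2) * Real.log n := by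
  have hk0 : (0:ℝ) < k := by linarith
  have hn0 : (0:ℝ) < n := by linarith
  set L := Real.log n with hLdef
  have hL0 : (0:ℝ) < L := by linarith
  set T := k ^ ((1:ℝ)/2) with hTdef
  have hT0 : 0 < T := Real.rpow_pos_of_pos hk0 _
  have hTsq : T ^ 2 = k := by
    rw [hTdef, ← Real.rpow_natCast (k ^ ((1:ℝ)/2)) 2, ← Real.rpow_mul hk0.le]
    norm_num
  have hT2 : 2 ≤ T ^ 2 := by rw [hTsq]; exact hk
  have hT1 : 1 ≤ T := by nlinarith
  have hhalf : ∀ s : ℕ, k ^ ((s:ℝ)/2) = T ^ s := by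
    intro s
    rw [hTdef, ← Real.rpow_natCast (k ^ ((1:ℝ)/2)) s, ← Real.rpow_mul hk0.le]
    ring_nf
  have e1 : k ^ (c + (r:ℝ)/2) = k ^ c * T ^ r := by
    rw [Real.rpow_add hk0, hhalf r]
  have e2 : k ^ (c + ((r:ℝ)+1)/2) = k ^ c * (T ^ r * T) := by
    have h : ((r:ℝ)+1)/2 = ((r+1:ℕ):ℝ)/2 := by push_cast; ring
    rw [h, Real.rpow_add hk0, hhalf (r+1), pow_succ]
  have e3 : k ^ (c - (r:ℝ)/2) = k ^ c / T ^ r := by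
    rw [Real.rpow_sub hk0, hhalf r]
  have e4 : k ^ (c - ((r:ℝ)+1)/2) = k ^ c / (T ^ r * T) := by
    have h : ((r:ℝ)+1)/2 = ((r+1:ℕ):ℝ)/2 := by push_cast; ring
    rw [h, Real.rpow_sub hk0, hhalf (r+1), pow_succ]
  have e5 : k ^ (c + 1 + (r:ℝ)/2) = k ^ c * (T ^ 2 * T ^ r) := by
    rw [show c + 1 + (r:ℝ)/2 = c + ((r:ℝ)/2 + 1) by ring, Real.rpow_add hk0,
      Real.rpow_add hk0, hhalf r, Real.rpow_one, ← hTsq]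
    ring
  have e6 : k ^ ((r:ℝ)+1) = (T ^ r * T) ^ 2 := by
    have h : ((r:ℝ)+1) = ((r+1:ℕ):ℝ) := by push_cast; ring
    rw [h, Real.rpow_natCast, ← hTsq]
    ring
  have hC0 : (0:ℝ) < k ^ c := Real.rpow_pos_of_pos hk0 _
  have hb0 : (0:ℝ) < T ^ r := pow_pos hT0 r
  have hb1 : (1:ℝ) ≤ T ^ r := one_le_pow₀ hT1
  have hA0 : (0:ℝ) < lam ^ r := pow_pos (by linarith) r
  have hpr : p r = lam * (T ^ r * T) ^ 2 * L / n := by rw [hp r, e6]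
  have hpr0 : 0 < p r := by rw [hpr]; positivity
  have h16 : (16:ℝ) ≤ lam ^ 2 := by nlinarith [hlam, sq_nonneg (lam - 4)]
  have hTL : (1:ℝ) ≤ T * L := hT1.trans (le_mul_of_one_le_right hT0.le hlog)
  have hu : (0:ℝ) < lam ^ r * k ^ c * T ^ r := by positivity
  constructor
  · refine hyrec.trans ?_
    rw [e1, e4, hpr, pow_succ]
    have hzr' : z r ≤ 15 * lam ^ r * (k ^ c * (T ^ r * T)) * L := by rw [← e2]; exact hzr
    calc (4 / (lam * (T ^ r * T) ^ 2 * L / n)) * (z r + lam ^ r * (k ^ c * T ^ r))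
        ≤ (4 / (lam * (T ^ r * T) ^ 2 * L / n)) *
            (15 * lam ^ r * (k ^ c * (T ^ r * T)) * L + lam ^ r * (k ^ c * T ^ r)) := by
          apply mul_le_mul_of_nonneg_left (add_le_add_left hzr' _)
          positivity
      _ ≤ 4 * (lam ^ r * lam) * n * (k ^ c / (T ^ r * T)) := by
          rw [div_mul_eq_mul_div, div_le_iff₀ (by positivity)]
          have heq : 4 * (lam ^ r * lam) * n * (k ^ c / (T ^ r * T)) *
              (lam * (T ^ r * T) ^ 2 * L / n) =
              4 * lam ^ 2 * (lam ^ r * k ^ c * T ^ r) * T * L := by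
            field_simp
          rw [heq]
          nlinarith [mul_nonneg (mul_nonneg (sub_nonneg.2 h16) hu.le)
              (by positivity : (0:ℝ) ≤ T * L),
            mul_nonneg hu.le (sub_nonneg.2 hTL)]
  · refine hzrec.trans ?_
    rw [pow_succ, e1, e3, e5, hpr]
    have hzr' : z r ≤ 15 * lam ^ r * (k ^ c * (T ^ r * T)) * L := by rw [← e2]; exact hzr
    have hstep : 2 * (lam * (T ^ r * T) ^ 2 * L / n) *
        (y r + 2 * lam ^ r * n * (k ^ c / T ^ r)) ≤
        12 * lam * (lam ^ r * k ^ c * T ^ r) * T ^ 2 * L := by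
      have h6 : y r + 2 * lam ^ r * n * (k ^ c / T ^ r) ≤
          6 * lam ^ r * n * (k ^ c / T ^ r) := by
        rw [← e3]; linarith [hyr]
      calc 2 * (lam * (T ^ r * T) ^ 2 * L / n) *
            (y r + 2 * lam ^ r * n * (k ^ c / T ^ r))
          ≤ 2 * (lam * (T ^ r * T) ^ 2 * L / n) *
              (6 * lam ^ r * n * (k ^ c / T ^ r)) := by
            apply mul_le_mul_of_nonneg_left h6; positivity
        _ = 12 * lam * (lam ^ r * k ^ c * T ^ r) * T ^ 2 * L := by
            field_simp
            ring
    have hfin : 12 * lam * (lam ^ r * k ^ c * T ^ r) * T ^ 2 * L +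
        15 * lam ^ r * (k ^ c * (T ^ r * T)) * L + lam ^ r * (k ^ c * T ^ r) ≤
        15 * (lam ^ r * lam) * (k ^ c * (T ^ 2 * T ^ r)) * L := by
      nlinarith [mul_nonneg (mul_nonneg (sub_nonneg.2 hlam) hu.le)
          (mul_nonneg (sq_nonneg T) hL0.le),
        mul_nonneg hu.le (sub_nonneg.2 hTL),
        mul_nonneg (mul_nonneg hu.le hL0.le) (sub_nonneg.2 hT2),
        mul_nonneg (mul_nonneg hu.le hL0.le) (sq_nonneg (T - 5/4)),
        mul_nonneg hu.le (sub_nonneg.2 hlog)]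
    linarith
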